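/- Let q ∈ (0,1), let f : ℝ → ℝ be continuously differentiable, and let T = {0} ∪ {q^n | n ∈ ℕ, n ≥ 1}, a = 0, b = q (so ρ_T(q) = q²). Then the series ∑_{n=1}^∞ (q^n − q^{n+1})·f(q^{n+1}) converges and ∑_{n=1}^∞ (q^n − q^{n+1})·f(q^{n+1}) = q·f(q) − ∫_0^q S_T(s)·f′(s) ds, where the integral is the (Riemann/Lebesgue) integral on ℝ. -/

import Mathlib

open Set

/-- Forward jump operator of a time scale `T`. -/
noncomputable def tsSigma (T : Set ℝ) (t : ℝ) : ℝ := sInf {s | s ∈ T ∧ t < s}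

/-- Backward jump operator of a time scale `T`. -/
noncomputable def tsRho (T : Set ℝ) (t : ℝ) : ℝ := sSup {s | s ∈ T ∧ s < t}

/-- The function `S_T : [a,b] → ℝ`: `S_T t = sInf {s ∈ T ∩ [a,b] | s > t}` for
`t ∈ [a, ρ_T b)` and `S_T t = b` for `t ∈ [ρ_T b, b]`. -/
noncomputable def tsS (T : Set ℝ) (a b : ℝ) : ℝ → ℝ :=
  fun t => if t < tsRho T b then sInf {s | s ∈ T ∩ Set.Icc a b ∧ t < s} else b

/-- The set `I(T)` associated to `a, b ∈ T`: the union of the intervals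
`[τ, σ_T(τ))` over right-discrete `τ ∈ T` with `a ≤ τ < ρ_T(b)`. -/
noncomputable def tsI (T : Set ℝ) (a b : ℝ) : Set ℝ :=
  ⋃ τ ∈ {τ | τ ∈ T ∧ a ≤ τ ∧ τ < tsRho T b ∧ τ < tsSigma T τ}, Set.Ico τ (tsSigma T τ)


/-- The time scale `{0} ∪ {q ^ n | n ≥ 1}`. -/
def qScale (q : ℝ) : Set ℝ := {0} ∪ {x | ∃ n : ℕ, 1 ≤ n ∧ x = q ^ n}

lemma qScale_rho (q : ℝ) (hq : q ∈ Set.Ioo (0 : ℝ) 1) : tsRho (qScale q) q = q ^ 2 := by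
  obtain ⟨hq0, hq1⟩ := hq
  have hq2 : q ^ 2 < q := by
    calc q ^ 2 < 1 ^ 2 * q := by nlinarith
    _ = q := by ring
  have hmem : q ^ 2 ∈ {s | s ∈ qScale q ∧ s < q} :=
    ⟨Or.inr ⟨2, by norm_num⟩, hq2⟩
  have hub : ∀ s ∈ {s | s ∈ qScale q ∧ s < q}, s ≤ q ^ 2 := by
    rintro s ⟨hs | ⟨n, hn1, rfl⟩, hlt⟩
    · simp only [mem_singleton_iff] at hs; subst hs; positivity
    · have hn2 : 2 ≤ n := by
        by_contra h
        interval_cases n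
        rw [pow_one] at hlt
        exact absurd hlt (lt_irrefl q)
      exact pow_le_pow_of_le_one hq0.le hq1.le hn2
  exact le_antisymm (csSup_le ⟨_, hmem⟩ hub) (le_csSup ⟨q ^ 2, hub⟩ hmem)

lemma qScale_S_mono (q : ℝ) (hq : q ∈ Set.Ioo (0 : ℝ) 1) : Monotone (tsS (qScale q) 0 q) := by
  obtain ⟨hq0, hq1⟩ := hq
  have hq2 : q ^ 2 < q := by nlinarith
  have hqmem : ∀ t : ℝ, t < q → q ∈ {s | s ∈ qScale q ∩ Set.Icc 0 q ∧ t < s} := by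
    intro t ht
    exact ⟨⟨Or.inr ⟨1, le_rfl, (pow_one q).symm⟩, ⟨hq0.le, le_rfl⟩⟩, ht⟩
  have hbdd : ∀ t : ℝ, BddBelow {s | s ∈ qScale q ∩ Set.Icc 0 q ∧ t < s} := by
    intro t
    exact ⟨0, fun s hs => hs.1.2.1⟩
  intro t₁ t₂ hle
  simp only [tsS, qScale_rho q ⟨hq0, hq1⟩]
  by_cases h2 : t₂ < q ^ 2
  · have h1 : t₁ < q ^ 2 := lt_of_le_of_lt hle h2
    rw [if_pos h1, if_pos h2]
    exact csInf_le_csInf (hbdd t₁) ⟨q, hqmem t₂ (h2.trans hq2)⟩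
      (fun s hs => ⟨hs.1, lt_of_le_of_lt hle hs.2⟩)
  · rw [if_neg h2]
    by_cases h1 : t₁ < q ^ 2
    · rw [if_pos h1]
      exact csInf_le (hbdd t₁) (hqmem t₁ (h1.trans hq2))
    · rw [if_neg h1]

lemma qScale_S_eq (q : ℝ) (hq : q ∈ Set.Ioo (0 : ℝ) 1) (n : ℕ) (s : ℝ)
    (hs : s ∈ Set.Ico (q ^ (n + 2)) (q ^ (n + 1))) :
    tsS (qScale q) 0 q s = q ^ (n + 1) := by
  obtain ⟨hq0, hq1⟩ := hq
  obtain ⟨hs1, hs2⟩ := hs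
  rw [tsS, qScale_rho q ⟨hq0, hq1⟩]
  by_cases h : s < q ^ 2
  · rw [if_pos h]
    refine IsLeast.csInf_eq ⟨⟨⟨Or.inr ⟨n + 1, by omega, rfl⟩,
      ⟨by positivity, by simpa using pow_le_pow_of_le_one hq0.le hq1.le (by omega : 1 ≤ n + 1)⟩⟩,
      hs2⟩, ?_⟩
    rintro t ⟨⟨ht | ⟨m, hm1, rfl⟩, _⟩, hst⟩
    · simp only [mem_singleton_iff] at ht
      subst ht
      have : (0 : ℝ) < q ^ (n + 2) := by positivity
      linarith
    · have : q ^ (n + 2) < q ^ m := lt_of_le_of_lt hs1 hst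
      have hm : m < n + 2 := ((pow_lt_pow_iff_right_of_lt_one₀ hq0 hq1).mp this)
      exact pow_le_pow_of_le_one hq0.le hq1.le (by omega)
  · rw [if_neg h]
    push_neg at h
    have : q ^ 2 < q ^ (n + 1) := lt_of_le_of_lt h hs2
    have hn : n + 1 < 2 := (pow_lt_pow_iff_right_of_lt_one₀ hq0 hq1).mp this
    have hn0 : n = 0 := by omega
    subst hn0
    simp

theorem stmt12 (q : ℝ) (hq : q ∈ Set.Ioo (0 : ℝ) 1) (f : ℝ → ℝ) (hf : ContDiff ℝ 1 f) :
    HasSum (fun n : ℕ => (q ^ (n + 1) - q ^ (n + 2)) * f (q ^ (n + 2)))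
      (q * f q - ∫ s in (0 : ℝ)..q, tsS (qScale q) 0 q s * deriv f s) := by
  obtain ⟨hq0, hq1⟩ := hq
  set g : ℝ → ℝ := tsS (qScale q) 0 q with hg
  have hgmono : Monotone g := qScale_S_mono q ⟨hq0, hq1⟩
  have hf' : Continuous (deriv f) := hf.continuous_deriv le_rfl
  -- interval integrability on every interval
  have hint : ∀ a b : ℝ, IntervalIntegrable (fun s => g s * deriv f s) MeasureTheory.volume a b :=
    fun a b => (hgmono.monotoneOn _).intervalIntegrable.mul_continuousOn hf'.continuousOn
  -- the value of the integral on each piece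
  have hpiece : ∀ n : ℕ, (∫ s in (q ^ (n + 2))..(q ^ (n + 1)), g s * deriv f s)
      = q ^ (n + 1) * (f (q ^ (n + 1)) - f (q ^ (n + 2))) := by
    intro n
    have hle : q ^ (n + 2) ≤ q ^ (n + 1) := pow_le_pow_of_le_one hq0.le hq1.le (by omega)
    have hcongr : (∫ s in (q ^ (n + 2))..(q ^ (n + 1)), g s * deriv f s)
        = ∫ s in (q ^ (n + 2))..(q ^ (n + 1)), q ^ (n + 1) * deriv f s := by
      apply intervalIntegral.integral_congr_ae
      have hsing : (MeasureTheory.volume : MeasureTheory.Measure ℝ) {q ^ (n + 1)} = 0 :=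
        MeasureTheory.measure_singleton _
      filter_upwards [MeasureTheory.measure_eq_zero_iff_ae_notMem.mp hsing] with x hx hxI
      rw [Set.uIoc_of_le hle] at hxI
      have hxlt : x < q ^ (n + 1) := lt_of_le_of_ne hxI.2 (by simpa using hx)
      rw [hg, qScale_S_eq q ⟨hq0, hq1⟩ n x ⟨hxI.1.le, hxlt⟩]
    rw [hcongr, intervalIntegral.integral_const_mul,
      intervalIntegral.integral_deriv_eq_sub
        (fun x _ => (hf.differentiable one_ne_zero).differentiableAt)
        (hf'.intervalIntegrable _ _)]
  -- telescoping identity for partial sums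
  have htel : ∀ N : ℕ, (∑ n ∈ Finset.range N, (q ^ (n + 1) - q ^ (n + 2)) * f (q ^ (n + 2)))
      = q * f q - q ^ (N + 1) * f (q ^ (N + 1))
        - ∫ s in (q ^ (N + 1))..q, g s * deriv f s := by
    intro N
    induction N with
    | zero => simp [intervalIntegral.integral_same]
    | succ N ih =>
      rw [Finset.sum_range_succ, ih]
      have hadj : (∫ s in (q ^ (N + 2))..(q ^ (N + 1)), g s * deriv f s)
          + ∫ s in (q ^ (N + 1))..q, g s * deriv f s
          = ∫ s in (q ^ (N + 2))..q, g s * deriv f s :=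
        intervalIntegral.integral_add_adjacent_intervals (hint _ _) (hint _ _)
      have h2 : (∫ s in (q ^ (N + 1 + 1))..q, g s * deriv f s)
          = q ^ (N + 1) * (f (q ^ (N + 1)) - f (q ^ (N + 2)))
            + ∫ s in (q ^ (N + 1))..q, g s * deriv f s := by
        rw [show N + 1 + 1 = N + 2 from rfl, ← hadj, hpiece N]
      rw [h2]
      ring_nf
  -- boundedness of g
  have hgbdd : ∀ x : ℝ, x ∈ Set.Icc (0 : ℝ) q → |g x| ≤ q := by
    intro x _
    have hq2 : q ^ 2 < q := by nlinarith
    have hA : q ∈ {s | s ∈ qScale q ∩ Set.Icc 0 q ∧ x < s} → True := fun _ => trivial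
    rw [hg, tsS, qScale_rho q ⟨hq0, hq1⟩]
    by_cases h : x < q ^ 2
    · rw [if_pos h]
      have hqmem : q ∈ {s | s ∈ qScale q ∩ Set.Icc 0 q ∧ x < s} :=
        ⟨⟨Or.inr ⟨1, le_rfl, (pow_one q).symm⟩, ⟨hq0.le, le_rfl⟩⟩, h.trans hq2⟩
      have hbdd : BddBelow {s | s ∈ qScale q ∩ Set.Icc 0 q ∧ x < s} :=
        ⟨0, fun s hs => hs.1.2.1⟩
      have h1 : sInf {s | s ∈ qScale q ∩ Set.Icc 0 q ∧ x < s} ≤ q := csInf_le hbdd hqmem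
      have h2 : (0 : ℝ) ≤ sInf {s | s ∈ qScale q ∩ Set.Icc 0 q ∧ x < s} :=
        le_csInf ⟨q, hqmem⟩ (fun s hs => hs.1.2.1)
      rw [abs_le]; constructor <;> linarith
    · rw [if_neg h, abs_of_nonneg hq0.le]
  -- bound on the derivative
  obtain ⟨M, hM⟩ := (isCompact_Icc : IsCompact (Set.Icc (0 : ℝ) q)).exists_bound_of_continuousOn
    hf'.continuousOn
  have hM0 : 0 ≤ max M 0 := le_max_right _ _
  -- bound on the integrand
  have hbound : ∀ x ∈ Set.Icc (0 : ℝ) q, ‖g x * deriv f x‖ ≤ q * max M 0 := by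
    intro x hx
    rw [norm_mul]
    have h1 : ‖g x‖ ≤ q := hgbdd x hx
    have h2 : ‖deriv f x‖ ≤ max M 0 := le_trans (hM x hx) (le_max_left _ _)
    exact mul_le_mul h1 h2 (norm_nonneg _) hq0.le
  -- the tail integral tends to 0
  have hpow : Filter.Tendsto (fun N : ℕ => q ^ (N + 1)) Filter.atTop (nhds 0) := by
    have := tendsto_pow_atTop_nhds_zero_of_lt_one hq0.le hq1
    exact this.comp (Filter.tendsto_add_atTop_nat 1)
  have hJ : Filter.Tendsto (fun N : ℕ => ∫ s in (0 : ℝ)..(q ^ (N + 1)), g s * deriv f s)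
      Filter.atTop (nhds 0) := by
    apply squeeze_zero_norm (a := fun N : ℕ => (q * max M 0) * q ^ (N + 1))
    · intro N
      have hle : q ^ (N + 1) ≤ q := by
        simpa using pow_le_pow_of_le_one hq0.le hq1.le (by omega : 1 ≤ N + 1)
      have := intervalIntegral.norm_integral_le_of_norm_le_const
        (C := q * max M 0) (a := (0 : ℝ)) (b := q ^ (N + 1)) (f := fun s => g s * deriv f s) ?_
      · calc ‖∫ s in (0:ℝ)..(q ^ (N + 1)), g s * deriv f s‖
            ≤ (q * max M 0) * |q ^ (N + 1) - 0| := this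
          _ = (q * max M 0) * q ^ (N + 1) := by
              rw [sub_zero, abs_of_nonneg (by positivity)]
      · intro x hx
        rw [Set.uIoc_of_le (by positivity)] at hx
        exact hbound x ⟨hx.1.le, hx.2.trans hle⟩
    · simpa using (tendsto_const_nhds (x := q * max M 0)).mul hpow
  -- the term q^(N+1) * f(q^(N+1)) tends to 0
  have hterm : Filter.Tendsto (fun N : ℕ => q ^ (N + 1) * f (q ^ (N + 1)))
      Filter.atTop (nhds 0) := by
    have hfc : Filter.Tendsto (fun N : ℕ => f (q ^ (N + 1))) Filter.atTop (nhds (f 0)) :=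
      (hf.continuous.tendsto 0).comp hpow
    simpa using hpow.mul hfc
  -- summability
  have hsummable : Summable (fun n : ℕ => ‖(q ^ (n + 1) - q ^ (n + 2)) * f (q ^ (n + 2))‖) := by
    obtain ⟨C, hC⟩ := (isCompact_Icc : IsCompact (Set.Icc (0 : ℝ) q)).exists_bound_of_continuousOn
      hf.continuous.continuousOn
    apply Summable.of_nonneg_of_le (fun n => norm_nonneg _)
      (f := fun n : ℕ => (q * max C 0) * q ^ n)
    · intro n
      rw [norm_mul]
      have h1 : ‖q ^ (n + 1) - q ^ (n + 2)‖ ≤ q * q ^ n := by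
        rw [Real.norm_eq_abs, abs_of_nonneg
          (by linarith [pow_le_pow_of_le_one hq0.le hq1.le (by omega : n + 1 ≤ n + 2)])]
        have : q ^ (n + 2) ≥ 0 := by positivity
        calc q ^ (n + 1) - q ^ (n + 2) ≤ q ^ (n + 1) := by linarith
          _ = q * q ^ n := by ring
      have h2 : ‖f (q ^ (n + 2))‖ ≤ max C 0 := by
        refine le_trans (hC _ ⟨by positivity, ?_⟩) (le_max_left _ _)
        simpa using pow_le_pow_of_le_one hq0.le hq1.le (by omega : 1 ≤ n + 2)
      calc ‖q ^ (n + 1) - q ^ (n + 2)‖ * ‖f (q ^ (n + 2))‖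
          ≤ (q * q ^ n) * max C 0 :=
            mul_le_mul h1 h2 (norm_nonneg _) (by positivity)
        _ = (q * max C 0) * q ^ n := by ring
    · exact (summable_geometric_of_lt_one hq0.le hq1).mul_left _
  rw [hasSum_iff_tendsto_nat_of_summable_norm hsummable]
  -- prove the limit of partial sums
  have hlim : Filter.Tendsto
      (fun N : ℕ => q * f q - q ^ (N + 1) * f (q ^ (N + 1))
        - ∫ s in (q ^ (N + 1))..q, g s * deriv f s)
      Filter.atTop (nhds (q * f q - ∫ s in (0 : ℝ)..q, g s * deriv f s)) := by
    have hsplit : ∀ N : ℕ, (∫ s in (q ^ (N + 1))..q, g s * deriv f s)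
        = (∫ s in (0 : ℝ)..q, g s * deriv f s)
          - ∫ s in (0 : ℝ)..(q ^ (N + 1)), g s * deriv f s := by
      intro N
      have := intervalIntegral.integral_add_adjacent_intervals
        (hint 0 (q ^ (N + 1))) (hint (q ^ (N + 1)) q)
      linarith
    have : Filter.Tendsto
        (fun N : ℕ => q * f q - q ^ (N + 1) * f (q ^ (N + 1))
          - ((∫ s in (0 : ℝ)..q, g s * deriv f s)
            - ∫ s in (0 : ℝ)..(q ^ (N + 1)), g s * deriv f s))
        Filter.atTop
        (nhds (q * f q - 0 - ((∫ s in (0 : ℝ)..q, g s * deriv f s) - 0))) :=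
      ((tendsto_const_nhds.sub hterm).sub (tendsto_const_nhds.sub hJ))
    simp only [sub_zero] at this
    exact this.congr (fun N => by rw [← hsplit N])
  exact hlim.congr (fun N => (htel N).symm)
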